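/- Let θ > 0, J ≥ 1 be an integer, n ≥ 1, and let c₁,…,c_J be nonnegative integers summing to n. Define for r ≥ 0 the quantity p̃_r = (θ/J)·r!/(θ+n) · Σ_{j=1}^{J} binom(c_j, r) · (θ/J)_{(c_j - r)} / (θ/J)_{(c_j)}. Then Σ_{r=0}^{n} p̃_r = 1. -/

import Mathlib

open Finset

noncomputable def risingFactorial (x : ℝ) (u : ℕ) : ℝ :=
  ∏ j ∈ Finset.range u, (x + j)

noncomputable def genFacCoef (u v : ℕ) (a : ℝ) : ℝ :=
  (1 / (v.factorial : ℝ)) *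
    ∑ i ∈ Finset.range (v + 1),
      (-1 : ℝ) ^ i * (v.choose i : ℝ) * risingFactorial (-(i * a)) u

def stirling1 : ℕ → ℕ → ℕ
  | 0, 0 => 1
  | 0, _ + 1 => 0
  | _ + 1, 0 => 0
  | u + 1, v + 1 => u * stirling1 u (v + 1) + stirling1 u v

lemma rf_pos {x : ℝ} (hx : 0 < x) (u : ℕ) : 0 < risingFactorial x u :=
  Finset.prod_pos (fun j _ => by positivity)

lemma rf_succ (x : ℝ) (u : ℕ) :
    risingFactorial x (u+1) = risingFactorial x u * (x + u) :=
  Finset.prod_range_succ _ _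

lemma rf_shift (x : ℝ) (u : ℕ) :
    risingFactorial x (u+1) = x * risingFactorial (x+1) u := by
  unfold risingFactorial
  rw [Finset.prod_range_succ']
  simp only [Nat.cast_zero, add_zero]
  rw [mul_comm]
  congr 1
  refine Finset.prod_congr rfl (fun i _ => ?_)
  push_cast; ring

lemma key (a : ℝ) : ∀ cc : ℕ,
    ∑ r ∈ range (cc+1), (r.factorial : ℝ) * (cc.choose r) * risingFactorial a (cc - r)
      = risingFactorial (a+1) cc := by
  intro cc
  induction cc with
  | zero => simp [risingFactorial]
  | succ m ih =>
    rw [Finset.sum_range_succ' (fun r => (r.factorial : ℝ) * ((m+1).choose r) * risingFactorial a (m+1 - r))]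
    simp only [Nat.choose_succ_succ, Nat.choose_zero_right,
      Nat.cast_one, Nat.factorial_zero, one_mul, Nat.sub_zero]
    have hsplit : ∀ r ∈ range (m+1),
        ((r+1).factorial : ℝ) * ((m.choose r + m.choose (r+1) : ℕ) : ℝ) *
          risingFactorial a (m+1 - (r+1))
        = (((r:ℝ)+1) * ((r.factorial : ℝ) * (m.choose r) * risingFactorial a (m-r)))
          + ((r+1).factorial : ℝ) * (m.choose (r+1)) * risingFactorial a (m - r) := by
      intro r hr
      have h1 : m + 1 - (r+1) = m - r := by omega
      rw [h1]
      push_cast [Nat.factorial_succ]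
      ring
    rw [Finset.sum_congr rfl hsplit, Finset.sum_add_distrib]
    -- B identity
    have hB :
        ∑ r ∈ range (m+1), ((r+1).factorial : ℝ) * (m.choose (r+1)) * risingFactorial a (m - r)
          = (∑ r ∈ range (m+1),
              (r.factorial : ℝ) * (m.choose r) * risingFactorial a (m - r) * (a + (m:ℝ) - r))
            - risingFactorial a (m+1) := by
      have e1 := Finset.sum_range_succ'
        (fun s => (s.factorial : ℝ) * (m.choose s) * risingFactorial a (m+1 - s)) (m+1)
      have e2 := Finset.sum_range_succ
        (fun s => (s.factorial : ℝ) * (m.choose s) * risingFactorial a (m+1 - s)) (m+1)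
      simp only [Nat.succ_sub_succ_eq_sub, Nat.factorial_zero, Nat.choose_zero_right,
        Nat.cast_one, one_mul, Nat.sub_zero, Nat.choose_succ_self, Nat.cast_zero,
        mul_zero, zero_mul, add_zero] at e1 e2
      have e3 : ∀ s ∈ range (m+1),
          (s.factorial : ℝ) * (m.choose s) * risingFactorial a (m+1 - s)
          = (s.factorial : ℝ) * (m.choose s) * risingFactorial a (m - s) * (a + (m:ℝ) - s) := by
        intro s hs
        have hsm : s ≤ m := by simpa [Nat.lt_succ_iff] using hs
        have h1 : m + 1 - s = (m - s) + 1 := by omega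
        rw [h1, rf_succ]
        have h2 : ((m - s : ℕ) : ℝ) = (m:ℝ) - s := by
          push_cast [Nat.cast_sub hsm]; ring
        rw [h2]; ring
      rw [Finset.sum_congr rfl e3] at e2
      rw [e2] at e1
      linarith [e1]
    rw [hB]
    have hpt : ∀ r ∈ range (m+1),
        ((r:ℝ)+1) * ((r.factorial : ℝ) * (m.choose r) * risingFactorial a (m-r))
        + (r.factorial : ℝ) * (m.choose r) * risingFactorial a (m - r) * (a + (m:ℝ) - r)
        = (a + (m:ℝ) + 1) * ((r.factorial : ℝ) * (m.choose r) * risingFactorial a (m - r)) := by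
      intro r hr; ring
    have hsum :
        (∑ r ∈ range (m+1), ((r:ℝ)+1) * ((r.factorial : ℝ) * (m.choose r) * risingFactorial a (m-r)))
        + (∑ r ∈ range (m+1),
            (r.factorial : ℝ) * (m.choose r) * risingFactorial a (m - r) * (a + (m:ℝ) - r))
        = (a + (m:ℝ) + 1) * ∑ r ∈ range (m+1),
            (r.factorial : ℝ) * (m.choose r) * risingFactorial a (m - r) := by
      rw [Finset.mul_sum, ← Finset.sum_add_distrib]
      exact Finset.sum_congr rfl hpt
    rw [ih] at hsum
    rw [rf_succ a m, rf_succ (a+1) m]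
    push_cast
    linear_combination hsum

lemma cell (a : ℝ) (ha0 : 0 < a) (D : ℝ) (hD : 0 < D) (k : ℕ) :
    (a / (D * risingFactorial a k)) * risingFactorial (a+1) k = (a + k) / D := by
  have hRF : risingFactorial a k ≠ 0 := ne_of_gt (rf_pos ha0 k)
  have hkey2 : a * risingFactorial (a+1) k = risingFactorial a k * (a + k) := by
    rw [← rf_shift, rf_succ]
  field_simp
  linear_combination hkey2

theorem sum_coverage_estimators_eq_one (θ : ℝ) (hθ : 0 < θ) (J : ℕ) (hJ : 1 ≤ J)
    (n : ℕ) (hn : 1 ≤ n) (c : Fin J → ℕ) (hc : ∑ j, c j = n) :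
    ∑ r ∈ Finset.range (n + 1),
        (θ / J) * (r.factorial : ℝ) / (θ + n) *
          ∑ j, ((c j).choose r : ℝ) * risingFactorial (θ / J) (c j - r)
            / risingFactorial (θ / J) (c j)
      = 1 := by
  set a : ℝ := θ / J with ha
  have hJ0 : (0:ℝ) < J := by exact_mod_cast hJ
  have ha0 : 0 < a := div_pos hθ hJ0
  have hθn : (0:ℝ) < θ + n := by positivity
  simp_rw [Finset.mul_sum]
  rw [Finset.sum_comm]
  have hcj : ∀ j, c j ≤ n := by
    intro j
    calc c j ≤ ∑ i, c i := Finset.single_le_sum (fun _ _ => Nat.zero_le _) (Finset.mem_univ j)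
    _ = n := hc
  have hterm : ∀ j ∈ (Finset.univ : Finset (Fin J)),
      (∑ r ∈ Finset.range (n+1),
        a * (r.factorial : ℝ) / (θ + n) *
          (((c j).choose r : ℝ) * risingFactorial a (c j - r) / risingFactorial a (c j)))
      = (a + (c j : ℝ)) / (θ + n) := by
    intro j _
    set k := c j with hk
    have hsub : (∑ r ∈ Finset.range (k+1),
        a * (r.factorial : ℝ) / (θ + n) *
          ((k.choose r : ℝ) * risingFactorial a (k - r) / risingFactorial a k))
        = ∑ r ∈ Finset.range (n+1),
        a * (r.factorial : ℝ) / (θ + n) *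
          ((k.choose r : ℝ) * risingFactorial a (k - r) / risingFactorial a k) := by
      refine Finset.sum_subset (Finset.range_subset_range.mpr (Nat.succ_le_succ (hcj j))) ?_
      intro r _ hr
      have : k < r := by simpa [Nat.lt_succ_iff, not_le] using (fun h => hr (Finset.mem_range.mpr (by omega)) : ¬ r ≤ k)
      rw [Nat.choose_eq_zero_of_lt this]
      simp
    rw [← hsub]
    have hfac : ∀ r ∈ Finset.range (k+1),
        a * (r.factorial : ℝ) / (θ + n) *
          ((k.choose r : ℝ) * risingFactorial a (k - r) / risingFactorial a k)
        = (a / ((θ + n) * risingFactorial a k)) *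
            ((r.factorial : ℝ) * (k.choose r : ℝ) * risingFactorial a (k - r)) := by
      intro r _
      field_simp
    rw [Finset.sum_congr rfl hfac, ← Finset.mul_sum, key a k]
    exact cell a ha0 (θ + n) hθn k
  rw [Finset.sum_congr rfl hterm, ← Finset.sum_div]
  rw [Finset.sum_add_distrib, Finset.sum_const, Finset.card_univ, Fintype.card_fin]
  have h1 : ∑ j, ((c j : ℝ)) = (n : ℝ) := by
    rw [← hc]; push_cast; rfl
  rw [h1]
  have h2 : (J : ℕ) • a = θ := by
    rw [nsmul_eq_mul, ha]
    field_simp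
  rw [h2, div_self (ne_of_gt hθn)]
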